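/- For every positive integer n, any terminal state reached by a play of the ordered Zeckendorf game on n is the Zeckendorf decomposition of n written in strictly increasing order: the list of indices (i_1, …, i_k) is strictly increasing, satisfies i_{j+1} ≥ i_j + 2 for all j (no two consecutive Fibonacci indices), and F_{i_1} + … + F_{i_k} = n. In particular all completed plays on n end at the same state. -/

import Mathlib

/-- Fibonacci numbers indexed so that `F 1 = 1`, `F 2 = 2`,
and `F (i+1) = F i + F (i-1)`. -/
def F (i : ℕ) : ℕ := Nat.fib (i + 1)

/-- A single legal move of the ordered Zeckendorf game, acting on an
adjacent pair of entries of the list of indices. -/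
inductive Move : List ℕ → List ℕ → Prop
  | merge (a b : List ℕ) (i : ℕ) (hi : 1 ≤ i) :
      Move (a ++ [i, i + 1] ++ b) (a ++ [i + 2] ++ b)
  | mergeOnes (a b : List ℕ) :
      Move (a ++ [1, 1] ++ b) (a ++ [2] ++ b)
  | split (a b : List ℕ) (i : ℕ) (hi : 2 < i) :
      Move (a ++ [i, i] ++ b) (a ++ [i - 2, i + 1] ++ b)
  | splitTwos (a b : List ℕ) :
      Move (a ++ [2, 2] ++ b) (a ++ [1, 3] ++ b)
  | switch (a b : List ℕ) (i j : ℕ) (hj : 1 ≤ j) (hij : j < i) :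
      Move (a ++ [i, j] ++ b) (a ++ [j, i] ++ b)

/-- A play of the ordered Zeckendorf game on `n` with `m` moves:
the initial state is `n` copies of `1`, and each step is a legal move. -/
def IsPlay (n : ℕ) (s : ℕ → List ℕ) (m : ℕ) : Prop :=
  s 0 = List.replicate n 1 ∧ ∀ t < m, Move (s t) (s (t + 1))

/-- A state is terminal if no legal move applies to it. -/
def Terminal (S : List ℕ) : Prop := ∀ T, ¬ Move S T

/-- The total Fibonacci value of a state. -/
def val (S : List ℕ) : ℕ := (S.map F).sum

/-- The monovariant `f(S) = Σ_{j=1}^k (k+1−j)·F_{i_j}` (here with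
`j` running over 0-based positions, so the weight of position `j` is
`k − j`). -/
def f (S : List ℕ) : ℕ := ∑ j : Fin S.length, (S.length - (j : ℕ)) * F (S.get j)

/-- `M n` is the maximal number of moves in a completed play of the
ordered Zeckendorf game on `n`. -/
noncomputable def M (n : ℕ) : ℕ :=
  sSup {m | ∃ s : ℕ → List ℕ, IsPlay n s m ∧ Terminal (s m)}

/-- The golden ratio `φ = (1+√5)/2`. -/
noncomputable def phi : ℝ := (1 + Real.sqrt 5) / 2

/-- Logarithm to base `φ`. -/
noncomputable def logphi (x : ℝ) : ℝ := Real.log x / Real.log phi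

lemma F_pos (i : ℕ) : 1 ≤ F i := Nat.fib_pos.2 (by omega)

lemma F_mono {a b : ℕ} (h : a ≤ b) : F a ≤ F b := Nat.fib_mono (by omega)

lemma F_merge (i : ℕ) : F i + F (i + 1) = F (i + 2) := by
  have h : Nat.fib (i + 3) = Nat.fib (i + 1) + Nat.fib (i + 2) := Nat.fib_add_two
  show Nat.fib (i + 1) + Nat.fib (i + 2) = Nat.fib (i + 3)
  omega

lemma F_split (i : ℕ) (hi : 2 < i) : F (i - 2) + F (i + 1) = F i + F i := by
  obtain ⟨k, rfl⟩ : ∃ k, i = k + 3 := ⟨i - 3, by omega⟩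
  show Nat.fib (k+2) + Nat.fib (k+5) = Nat.fib (k+4) + Nat.fib (k+4)
  have h1 : Nat.fib (k+5) = Nat.fib (k+3) + Nat.fib (k+4) := Nat.fib_add_two
  have h2 : Nat.fib (k+4) = Nat.fib (k+2) + Nat.fib (k+3) := Nat.fib_add_two
  omega

lemma val_append (a b : List ℕ) : val (a ++ b) = val a + val b := by
  simp [val]

lemma move_val {S T : List ℕ} (h : Move S T) : val T = val S := by
  cases h with
  | merge a b i hi =>
    simp only [val_append]
    have := F_merge i
    simp [val]; omega
  | mergeOnes a b =>
    simp only [val_append]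
    have h2 : Nat.fib 3 = 2 := rfl
    simp [val, F]
    omega
  | split a b i hi =>
    simp only [val_append]
    have := F_split i hi
    simp [val]; omega
  | splitTwos a b =>
    simp only [val_append]
    have h3 : Nat.fib 3 = 2 := rfl
    have h4 : Nat.fib 4 = 3 := rfl
    simp [val, F]
    omega
  | switch a b i j hj hij =>
    simp only [val_append]
    simp [val]; omega

lemma pos_mid {a b L L' : List ℕ} (h : ∀ x ∈ a ++ L ++ b, 1 ≤ x)
    (h' : ∀ x ∈ L', 1 ≤ x) : ∀ x ∈ a ++ L' ++ b, 1 ≤ x := by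
  intro x hx
  simp only [List.mem_append] at hx
  rcases hx with (hx | hx) | hx
  · exact h x (by simp [hx])
  · exact h' x hx
  · exact h x (by simp [hx])

lemma move_pos {S T : List ℕ} (h : Move S T) (hS : ∀ x ∈ S, 1 ≤ x) :
    ∀ x ∈ T, 1 ≤ x := by
  cases h with
  | merge a b i hi =>
    refine pos_mid hS ?_
    intro x hx
    simp only [List.mem_cons, List.not_mem_nil, or_false] at hx
    omega
  | mergeOnes a b =>
    refine pos_mid hS ?_
    intro x hx
    simp only [List.mem_cons, List.not_mem_nil, or_false] at hx
    omega
  | split a b i hi =>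
    refine pos_mid hS ?_
    intro x hx
    simp only [List.mem_cons, List.not_mem_nil, or_false] at hx
    rcases hx with rfl | rfl <;> omega
  | splitTwos a b =>
    refine pos_mid hS ?_
    intro x hx
    simp only [List.mem_cons, List.not_mem_nil, or_false] at hx
    rcases hx with rfl | rfl <;> omega
  | switch a b i j hj hij =>
    refine pos_mid hS ?_
    intro x hx
    simp only [List.mem_cons, List.not_mem_nil, or_false] at hx
    rcases hx with rfl | rfl <;> omega

lemma move_cons {S T : List ℕ} (x : ℕ) (h : Move S T) : Move (x :: S) (x :: T) := by
  cases h with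
  | merge a b i hi => exact Move.merge (x :: a) b i hi
  | mergeOnes a b => exact Move.mergeOnes (x :: a) b
  | split a b i hi => exact Move.split (x :: a) b i hi
  | splitTwos a b => exact Move.splitTwos (x :: a) b
  | switch a b i j hj hij => exact Move.switch (x :: a) b i j hj hij

lemma term_tail {x : ℕ} {S : List ℕ} (h : Terminal (x :: S)) : Terminal S :=
  fun T hT => h (x :: T) (move_cons x hT)

lemma term_pair {x y : ℕ} {t : List ℕ} (h : Terminal (x :: y :: t))
    (hx : 1 ≤ x) (hy : 1 ≤ y) : x + 2 ≤ y := by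
  by_contra hlt
  push_neg at hlt
  rcases lt_trichotomy x y with h1 | h1 | h1
  · have : y = x + 1 := by omega
    subst this
    exact h _ (Move.merge [] t x hx)
  · subst h1
    rcases Nat.lt_or_ge 2 x with h2 | h2
    · exact h _ (Move.split [] t x h2)
    · interval_cases x
      · exact h _ (Move.mergeOnes [] t)
      · exact h _ (Move.splitTwos [] t)
  · exact h _ (Move.switch [] t x y hy h1)

lemma term_chain : ∀ S : List ℕ, Terminal S → (∀ x ∈ S, 1 ≤ x) →
    List.Chain' (fun a b => a + 2 ≤ b) S := by
  intro S
  induction S with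
  | nil => intro _ _; exact List.IsChain.nil
  | cons x t ih =>
    intro h hpos
    cases t with
    | nil => exact List.IsChain.singleton x
    | cons y u =>
      refine List.IsChain.cons_cons (term_pair h ?_ ?_) (ih (term_tail h) ?_)
      · exact hpos x (by simp)
      · exact hpos y (by simp)
      · intro z hz; exact hpos z (by simp [hz])

lemma play_inv {n : ℕ} {s : ℕ → List ℕ} : ∀ m, IsPlay n s m →
    val (s m) = n ∧ ∀ x ∈ s m, 1 ≤ x := by
  intro m
  induction m with
  | zero =>
    rintro ⟨h0, _⟩
    rw [h0]
    constructor
    · simp [val, F]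
    · intro x hx; rw [List.eq_of_mem_replicate hx]
  | succ m ih =>
    rintro ⟨h0, hm⟩
    have hprev := ih ⟨h0, fun t ht => hm t (by omega)⟩
    have hmove := hm m (by omega)
    exact ⟨(move_val hmove).trans hprev.1, move_pos hmove hprev.2⟩

-- uniqueness: decreasing-order form
lemma val_lt (k : ℕ) : ∀ l : List ℕ, List.Pairwise (fun a b => b + 2 ≤ a) l →
    (∀ x ∈ l, 1 ≤ x) → (∀ x ∈ l, x ≤ k) → val l < F (k + 1) := by
  intro l
  induction l generalizing k with
  | nil => intro _ _ _; show (([] : List ℕ).map F).sum < F (k + 1); exact F_pos (k + 1)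
  | cons x t ih =>
    intro hp hpos hbd
    have hx1 : 1 ≤ x := hpos x (by simp)
    have hxk : x ≤ k := hbd x (by simp)
    have htbd : ∀ y ∈ t, y ≤ x - 2 := fun y hy => by
      have := (List.pairwise_cons.1 hp).1 y hy; omega
    have hval : val (x :: t) = F x + val t := by simp [val]
    rcases Nat.lt_or_ge x 2 with h2 | h2
    · -- x = 1, so t = []
      have ht : t = [] := by
        cases t with
        | nil => rfl
        | cons z u =>
          have h1 := hpos z (by simp)
          have h3 := htbd z (by simp)
          omega
      subst ht
      have : F x = 1 := by interval_cases x; rfl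
      have : (1:ℕ) < F (k + 1) := by
        calc (1:ℕ) < 2 := by omega
        _ = F 2 := rfl
        _ ≤ F (k+1) := F_mono (by omega)
      simp [val, ‹F x = 1›]
      omega
    · have ht : val t < F (x - 2 + 1) :=
        ih (x - 2) (List.pairwise_cons.1 hp).2 (fun y hy => hpos y (by simp [hy])) htbd
      have hstep : F x + F (x - 2 + 1) = F (x + 1) := by
        obtain ⟨j, rfl⟩ : ∃ j, x = j + 2 := ⟨x - 2, by omega⟩
        have h : F (j + 1) + F (j + 2) = F (j + 3) := F_merge (j + 1)
        show F (j + 2) + F (j + 1) = F (j + 3)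
        omega
      have hmon : F (x + 1) ≤ F (k + 1) := F_mono (by omega)
      omega

lemma val_inj : ∀ l1 l2 : List ℕ, List.Pairwise (fun a b => b + 2 ≤ a) l1 →
    (∀ x ∈ l1, 1 ≤ x) → List.Pairwise (fun a b => b + 2 ≤ a) l2 →
    (∀ x ∈ l2, 1 ≤ x) → val l1 = val l2 → l1 = l2 := by
  intro l1
  induction l1 with
  | nil =>
    intro l2 _ _ _ hpos2 hv
    cases l2 with
    | nil => rfl
    | cons y u =>
      exfalso
      have h1 := F_pos y
      simp [val] at hv
      omega
  | cons x t ih =>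
    intro l2 hp1 hpos1 hp2 hpos2 hv
    cases l2 with
    | nil =>
      exfalso
      have h1 := F_pos x
      simp [val] at hv
      omega
    | cons y u =>
      have key : ∀ (a : ℕ) (b : List ℕ), List.Pairwise (fun a b => b + 2 ≤ a) (a :: b) →
          (∀ x ∈ a :: b, 1 ≤ x) → val (a :: b) < F (a + 1) := by
        intro a b hp hpos
        exact val_lt a (a :: b) hp hpos
          (by
            intro z hz
            rcases List.mem_cons.1 hz with rfl | hz2
            · exact le_refl z
            · have := (List.pairwise_cons.1 hp).1 z hz2
              omega)
      have hxy : x = y := by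
        by_contra hne
        rcases lt_or_gt_of_ne hne with hlt | hgt
        · have h1 : val (x :: t) < F (x + 1) := key x t hp1 hpos1
          have h2 : F y ≤ val (y :: u) := by simp [val]
          have h3 : F (x + 1) ≤ F y := F_mono (by omega)
          omega
        · have h1 : val (y :: u) < F (y + 1) := key y u hp2 hpos2
          have h2 : F x ≤ val (x :: t) := by simp [val]
          have h3 : F (y + 1) ≤ F x := F_mono (by omega)
          omega
      subst hxy
      have hvt : val t = val u := by
        simp [val] at hv ⊢; omega
      have := ih u (List.pairwise_cons.1 hp1).2 (fun z hz => hpos1 z (by simp [hz]))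
        (List.pairwise_cons.1 hp2).2 (fun z hz => hpos2 z (by simp [hz])) hvt
      rw [this]

theorem stmt_1 (n : ℕ) (hn : 1 ≤ n) :
    (∀ (s : ℕ → List ℕ) (m : ℕ), IsPlay n s m → Terminal (s m) →
      (s m).Pairwise (· < ·) ∧
      List.Chain' (fun a b => a + 2 ≤ b) (s m) ∧
      val (s m) = n) ∧
    (∀ (s s' : ℕ → List ℕ) (m m' : ℕ), IsPlay n s m → Terminal (s m) →
      IsPlay n s' m' → Terminal (s' m') → s m = s' m') := by
  have main : ∀ (s : ℕ → List ℕ) (m : ℕ), IsPlay n s m → Terminal (s m) →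
      (∀ x ∈ s m, 1 ≤ x) ∧ List.Chain' (fun a b => a + 2 ≤ b) (s m) ∧ val (s m) = n := by
    intro s m hp ht
    obtain ⟨hv, hpos⟩ := play_inv m hp
    exact ⟨hpos, term_chain _ ht hpos, hv⟩
  have pairwise_of_chain : ∀ l : List ℕ, List.Chain' (fun a b => a + 2 ≤ b) l →
      List.Pairwise (fun a b => b + 2 ≤ a) l.reverse := by
    intro l hc
    rw [List.pairwise_reverse]
    haveI : IsTrans ℕ (fun a b : ℕ => a + 2 ≤ b) := ⟨fun a b c h1 h2 => by omega⟩
    exact List.isChain_iff_pairwise.1 hc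
  constructor
  · intro s m hp ht
    obtain ⟨hpos, hc, hv⟩ := main s m hp ht
    refine ⟨?_, hc, hv⟩
    haveI : IsTrans ℕ (fun a b : ℕ => a < b) := ⟨fun a b c h1 h2 => lt_trans h1 h2⟩
    exact List.isChain_iff_pairwise.1 (hc.imp (fun h => by omega))
  · intro s s' m m' hp ht hp' ht'
    obtain ⟨hpos, hc, hv⟩ := main s m hp ht
    obtain ⟨hpos', hc', hv'⟩ := main s' m' hp' ht'
    have := val_inj (s m).reverse (s' m').reverse
      (pairwise_of_chain _ hc) (fun x hx => hpos x (List.mem_reverse.1 hx))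
      (pairwise_of_chain _ hc') (fun x hx => hpos' x (List.mem_reverse.1 hx))
      (by
        have hr : ∀ l : List ℕ, val l.reverse = val l := by
          intro l; simp [val, List.map_reverse, List.sum_reverse]
        rw [hr, hr, hv, hv'])
    exact List.reverse_injective this
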